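/- Space-argument integral limit of the shape-derivative splitting: Let Ω ⊆ ℝ^d be a bounded open set with λ^d(∂Ω) = 0, V : ℝ^d → ℝ^d an admissible distortion, ũ : ℝ^d → ℝ of class C², and ψ : ℝ^d × ℝ → ℝ of class C¹. Then lim_{ε→0} (1/ε) ∫_{Ω_ε} [ψ(x, ũ(T_ε(x))) − ψ(T_ε(x), ũ(T_ε(x)))] · |det(I_d + ε DV(x))| dλ^d(x) = − ∫_Ω ⟨∇_x ψ(x, ũ(x)), V(x)⟩ dλ^d(x), where ∇_x ψ denotes the gradient of ψ with respect to its first (vector) argument. -/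

import Mathlib

open Filter MeasureTheory RealInnerProductSpace Set Metric Asymptotics

section Aux

variable {d : ℕ} (Ω : Set (EuclideanSpace ℝ (Fin d)))
  (V : EuclideanSpace ℝ (Fin d) → EuclideanSpace ℝ (Fin d))
  (u : EuclideanSpace ℝ (Fin d) → ℝ)
  (ψ : EuclideanSpace ℝ (Fin d) × ℝ → ℝ)

/-- The moving domain. -/
noncomputable def auxS (ε : ℝ) : Set (EuclideanSpace ℝ (Fin d)) := {y | y + ε • V y ∈ Ω}

/-- The integrand (without the `1/ε` factor). -/
noncomputable def auxG (ε : ℝ) (x : EuclideanSpace ℝ (Fin d)) : ℝ :=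
  (ψ (x, u (x + ε • V x)) - ψ (x + ε • V x, u (x + ε • V x))) *
    |ContinuousLinearMap.det
      (ContinuousLinearMap.id ℝ (EuclideanSpace ℝ (Fin d)) + ε • fderiv ℝ V x)|

/-- Full integrand over the whole space. -/
noncomputable def auxF (ε : ℝ) (x : EuclideanSpace ℝ (Fin d)) : ℝ :=
  (auxS Ω V ε).indicator (fun x => (1 / ε) * auxG V u ψ ε x) x

/-- Limit function. -/
noncomputable def auxf (x : EuclideanSpace ℝ (Fin d)) : ℝ :=
  Ω.indicator (fun x => -(⟪gradient (fun y => ψ (y, u x)) x, V x⟫)) x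

end Aux

set_option maxHeartbeats 1000000 in
/-- Space-argument integral limit of the shape-derivative splitting. -/
theorem space_argument_integral_limit
    {d : ℕ} (Ω : Set (EuclideanSpace ℝ (Fin d)))
    (hΩ_open : IsOpen Ω) (hΩ_bdd : Bornology.IsBounded Ω)
    (hfrontier : volume (frontier Ω) = 0)
    (V : EuclideanSpace ℝ (Fin d) → EuclideanSpace ℝ (Fin d))
    (hV : ContDiff ℝ 2 V) (hVbdd : ∃ M : ℝ, ∀ x, ‖V x‖ ≤ M)
    (u : EuclideanSpace ℝ (Fin d) → ℝ) (hu : ContDiff ℝ 2 u)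
    (ψ : EuclideanSpace ℝ (Fin d) × ℝ → ℝ) (hψ : ContDiff ℝ 1 ψ) :
    Tendsto (fun ε : ℝ =>
        (1 / ε) * ∫ x in {y | y + ε • V y ∈ Ω},
          (ψ (x, u (x + ε • V x)) - ψ (x + ε • V x, u (x + ε • V x))) *
            |ContinuousLinearMap.det
              (ContinuousLinearMap.id ℝ (EuclideanSpace ℝ (Fin d)) + ε • fderiv ℝ V x)|)
      (nhdsWithin 0 {0}ᶜ)
      (nhds (- ∫ x in Ω, ⟪gradient (fun y => ψ (y, u x)) x, V x⟫)) := by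
  classical
  have hdid : (ContinuousLinearMap.id ℝ (EuclideanSpace ℝ (Fin d))).det = 1 := by
    rw [ContinuousLinearMap.det, ContinuousLinearMap.coe_id, LinearMap.det_id]
  obtain ⟨M, hM⟩ := hVbdd
  have hM0 : 0 ≤ M := le_trans (norm_nonneg _) (hM 0)
  obtain ⟨R₀, hR₀⟩ := hΩ_bdd.subset_closedBall 0
  set R := max R₀ 0 with hR
  have hR0 : 0 ≤ R := le_max_right _ _
  have hΩR : Ω ⊆ closedBall 0 R := hR₀.trans (closedBall_subset_closedBall (le_max_left _ _))
  have hVc : Continuous V := hV.continuous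
  have hDVc : Continuous (fderiv ℝ V) := hV.continuous_fderiv (by norm_num)
  have huc : Continuous u := hu.continuous
  have hψc : Continuous ψ := hψ.continuous
  have hψd : Differentiable ℝ ψ := hψ.differentiable one_ne_zero
  have hDψc : Continuous (fderiv ℝ ψ) := hψ.continuous_fderiv one_ne_zero
  have hTc : ∀ ε : ℝ, Continuous fun x : EuclideanSpace ℝ (Fin d) => x + ε • V x :=
    fun ε => continuous_id.add (hVc.const_smul ε)
  have hSopen : ∀ ε : ℝ, IsOpen (auxS Ω V ε) := fun ε => hΩ_open.preimage (hTc ε)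
  -- continuity of the integrand for fixed ε
  have hGc : ∀ ε : ℝ, Continuous (auxG V u ψ ε) := by
    intro ε
    exact ((hψc.comp (continuous_id.prodMk (huc.comp (hTc ε)))).sub
        (hψc.comp ((hTc ε).prodMk (huc.comp (hTc ε))))).mul
      (continuous_abs.comp (ContinuousLinearMap.continuous_det.comp
        (continuous_const.add (hDVc.const_smul ε))))
  -- bounds
  -- bound for u on the big ball
  obtain ⟨W, hW⟩ := (isCompact_closedBall (0 : EuclideanSpace ℝ (Fin d)) (R + 2 * M)).exists_bound_of_continuousOn huc.continuousOn
  have hW0 : 0 ≤ W := le_trans (norm_nonneg _) (hW 0 (mem_closedBall_self (by positivity)))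
  -- bound for the derivative of ψ on a compact convex set
  set K : Set (EuclideanSpace ℝ (Fin d) × ℝ) :=
    closedBall (0 : EuclideanSpace ℝ (Fin d)) (R + 2 * M) ×ˢ Icc (-W) W with hK
  have hKcompact : IsCompact K := (isCompact_closedBall _ _).prod isCompact_Icc
  have hKconvex : Convex ℝ K := (convex_closedBall _ _).prod (convex_Icc _ _)
  obtain ⟨L, hL⟩ := hKcompact.exists_bound_of_continuousOn hDψc.continuousOn
  have hL0 : 0 ≤ L := le_trans (norm_nonneg _)
    (hL (0, 0) ⟨mem_closedBall_self (by positivity), ⟨neg_nonpos.mpr hW0, hW0⟩⟩)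
  -- bound for the determinant factor
  have hdetc : Continuous fun p : ℝ × EuclideanSpace ℝ (Fin d) =>
      |ContinuousLinearMap.det
        (ContinuousLinearMap.id ℝ (EuclideanSpace ℝ (Fin d)) + p.1 • fderiv ℝ V p.2)| :=
    continuous_abs.comp (ContinuousLinearMap.continuous_det.comp
      (continuous_const.add (continuous_fst.smul (hDVc.comp continuous_snd))))
  obtain ⟨Cd, hCd⟩ := ((isCompact_Icc (a := (-1:ℝ)) (b := 1)).prod
    (isCompact_closedBall (0 : EuclideanSpace ℝ (Fin d)) (R + M))).exists_bound_of_continuousOn hdetc.continuousOn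
  have hCd0 : 0 ≤ Cd := le_trans (norm_nonneg _)
    (hCd (0, 0) ⟨⟨by norm_num, by norm_num⟩, mem_closedBall_self (by positivity)⟩)
  set bound : EuclideanSpace ℝ (Fin d) → ℝ :=
    (closedBall (0 : EuclideanSpace ℝ (Fin d)) (R + M)).indicator (fun _ => M * L * Cd) with hbound
  have hbound_int : Integrable bound := by
    refine ((MeasureTheory.integrableOn_const_iff (C := M * L * Cd)).mpr (Or.inr ?_)).integrable_indicator
      measurableSet_closedBall
    exact measure_closedBall_lt_top
  -- filter facts
  have hne : ∀ᶠ ε : ℝ in nhdsWithin 0 {0}ᶜ, ε ≠ 0 := eventually_mem_nhdsWithin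
  have hsmall : ∀ᶠ ε : ℝ in nhdsWithin 0 {0}ᶜ, |ε| ≤ 1 := by
    apply eventually_nhdsWithin_of_eventually_nhds
    have : ∀ᶠ ε : ℝ in nhds 0, |ε - 0| < 1 := eventually_abs_sub_lt 0 one_pos
    filter_upwards [this] with ε hε
    simpa using hε.le
  -- measurability
  have hmeas : ∀ᶠ ε : ℝ in nhdsWithin 0 {0}ᶜ, AEStronglyMeasurable (auxF Ω V u ψ ε) volume := by
    refine Eventually.of_forall fun ε => ?_
    exact ((continuous_const.mul (hGc ε)).aestronglyMeasurable).indicator (hSopen ε).measurableSet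
  -- domination
  have h_bound : ∀ᶠ ε : ℝ in nhdsWithin 0 {0}ᶜ,
      ∀ᵐ x, ‖auxF Ω V u ψ ε x‖ ≤ bound x := by
    filter_upwards [hsmall, hne] with ε hε1 hε0
    refine MeasureTheory.ae_of_all _ fun x => ?_
    by_cases hx : x ∈ auxS Ω V ε
    · have hxΩ : x + ε • V x ∈ Ω := hx
      have hx1 : ‖x + ε • V x‖ ≤ R := mem_closedBall_zero_iff.mp (hΩR hxΩ)
      have hεV : ‖ε • V x‖ ≤ M := by
        rw [norm_smul]
        calc ‖ε‖ * ‖V x‖ ≤ 1 * M :=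
              mul_le_mul hε1 (hM x) (norm_nonneg _) zero_le_one
          _ = M := one_mul M
      have hxB : ‖x‖ ≤ R + M := by
        calc ‖x‖ = ‖(x + ε • V x) - ε • V x‖ := by rw [add_sub_cancel_right]
          _ ≤ ‖x + ε • V x‖ + ‖ε • V x‖ := norm_sub_le _ _
          _ ≤ R + M := add_le_add hx1 hεV
      have hb : bound x = M * L * Cd :=
        Set.indicator_of_mem (mem_closedBall_zero_iff.mpr hxB) _
      have hF : auxF Ω V u ψ ε x = (1 / ε) * auxG V u ψ ε x := Set.indicator_of_mem hx _
      rw [hF, hb]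
      -- the two points for the mean value estimate
      set w : ℝ := u (x + ε • V x) with hw
      have hp1K : ((x, w) : EuclideanSpace ℝ (Fin d) × ℝ) ∈ K := by
        constructor
        · exact mem_closedBall_zero_iff.mpr (hxB.trans (by linarith))
        · have : ‖u (x + ε • V x)‖ ≤ W := hW _ (mem_closedBall_zero_iff.mpr (hx1.trans (by linarith)))
          exact abs_le.mp (by simpa using this)
      have hp2K : ((x + ε • V x, w) : EuclideanSpace ℝ (Fin d) × ℝ) ∈ K := by
        constructor
        · exact mem_closedBall_zero_iff.mpr (hx1.trans (by linarith))
        · have : ‖u (x + ε • V x)‖ ≤ W := hW _ (mem_closedBall_zero_iff.mpr (hx1.trans (by linarith)))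
          exact abs_le.mp (by simpa using this)
      have hmvt : |ψ (x, w) - ψ (x + ε • V x, w)| ≤ L * (|ε| * M) := by
        have := Convex.norm_image_sub_le_of_norm_fderiv_le (fun y _ => hψd y)
          (fun y hy => hL y hy) hKconvex hp2K hp1K
        have hkey : ((x, w) : EuclideanSpace ℝ (Fin d) × ℝ) - (x + ε • V x, w) = (-(ε • V x), 0) := by
          rw [Prod.mk_sub_mk]
          refine Prod.ext ?_ ?_
          · show x - (x + ε • V x) = -(ε • V x); abel
          · show w - w = 0; rw [sub_self]
        have hnorm : ‖((x, w) : EuclideanSpace ℝ (Fin d) × ℝ) - (x + ε • V x, w)‖ ≤ |ε| * M := by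
          rw [hkey, Prod.norm_def]
          simp only [norm_neg, norm_zero, norm_smul]
          refine max_le ?_ (by positivity)
          rw [Real.norm_eq_abs]
          exact mul_le_mul le_rfl (hM x) (norm_nonneg _) (abs_nonneg _)
        calc |ψ (x, w) - ψ (x + ε • V x, w)| ≤ L * ‖((x, w) : EuclideanSpace ℝ (Fin d) × ℝ) - (x + ε • V x, w)‖ := this
          _ ≤ L * (|ε| * M) := mul_le_mul_of_nonneg_left hnorm hL0
      have hdet : |ContinuousLinearMap.det
          (ContinuousLinearMap.id ℝ (EuclideanSpace ℝ (Fin d)) + ε • fderiv ℝ V x)| ≤ Cd := by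
        have := hCd (ε, x) ⟨⟨neg_le_of_abs_le hε1, le_of_abs_le hε1⟩,
          mem_closedBall_zero_iff.mpr hxB⟩
        exact (le_abs_self _).trans this
      have hdet0 : (0:ℝ) ≤ |ContinuousLinearMap.det
          (ContinuousLinearMap.id ℝ (EuclideanSpace ℝ (Fin d)) + ε • fderiv ℝ V x)| := abs_nonneg _
      unfold auxG
      rw [norm_mul, norm_mul]
      have h1e : ‖(1:ℝ)/ε‖ = 1/|ε| := by rw [norm_div]; simp
      rw [h1e]
      have hεpos : 0 < |ε| := abs_pos.mpr hε0
      calc 1/|ε| * (‖ψ (x, w) - ψ (x + ε • V x, w)‖ *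
              ‖|ContinuousLinearMap.det (ContinuousLinearMap.id ℝ (EuclideanSpace ℝ (Fin d)) + ε • fderiv ℝ V x)|‖)
          ≤ 1/|ε| * ((L * (|ε| * M)) * Cd) := by
            refine mul_le_mul_of_nonneg_left ?_ (by positivity)
            refine mul_le_mul hmvt ?_ (norm_nonneg _) (by positivity)
            rw [Real.norm_eq_abs, abs_abs]
            exact hdet
        _ = M * L * Cd := by field_simp
    · unfold auxF
      rw [Set.indicator_of_notMem hx, norm_zero]
      exact Set.indicator_nonneg (fun _ _ => by positivity) x
  -- pointwise limit
  have h_lim : ∀ᵐ x, Tendsto (fun ε => auxF Ω V u ψ ε x) (nhdsWithin 0 {0}ᶜ) (nhds (auxf Ω V u ψ x)) := by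
    filter_upwards [measure_eq_zero_iff_ae_notMem.mp hfrontier] with x hxf
    have hcont : Tendsto (fun ε : ℝ => x + ε • V x) (nhds 0) (nhds x) := by
      have hc : Continuous fun ε : ℝ => x + ε • V x :=
        continuous_const.add (continuous_id.smul continuous_const)
      simpa using hc.tendsto 0
    by_cases hx : x ∈ Ω
    · -- eventual membership
      have hmem : ∀ᶠ ε : ℝ in nhds 0, x + ε • V x ∈ Ω := hcont (hΩ_open.mem_nhds hx)
      have hmem' : ∀ᶠ ε : ℝ in nhdsWithin 0 {0}ᶜ, auxF Ω V u ψ ε x = (1/ε) * auxG V u ψ ε x :=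
        (hmem.filter_mono nhdsWithin_le_nhds).mono fun ε h => by
          unfold auxF; exact Set.indicator_of_mem (show x ∈ auxS Ω V ε from h) _
      -- determinant limit
      have hD : Tendsto (fun ε : ℝ => |ContinuousLinearMap.det
          (ContinuousLinearMap.id ℝ (EuclideanSpace ℝ (Fin d)) + ε • fderiv ℝ V x)|)
          (nhds 0) (nhds 1) := by
        have hc : Continuous fun ε : ℝ => |ContinuousLinearMap.det
            (ContinuousLinearMap.id ℝ (EuclideanSpace ℝ (Fin d)) + ε • fderiv ℝ V x)| :=
          continuous_abs.comp (ContinuousLinearMap.continuous_det.comp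
            (continuous_const.add (continuous_id.smul continuous_const)))
        have h0 := hc.tendsto 0
        rw [show (0:ℝ) • fderiv ℝ V x = 0 from zero_smul ℝ (fderiv ℝ V x)] at h0
        simpa [hdid] using h0
      -- strict differentiability limit
      have hstrict : HasStrictFDerivAt ψ (fderiv ℝ ψ (x, u x)) (x, u x) :=
        hψ.hasStrictFDerivAt one_ne_zero
      set c : ℝ := fderiv ℝ ψ (x, u x) (V x, 0) with hc
      set p : ℝ → (EuclideanSpace ℝ (Fin d) × ℝ) × (EuclideanSpace ℝ (Fin d) × ℝ) :=
        fun ε => ((x + ε • V x, u (x + ε • V x)), (x, u (x + ε • V x))) with hpdef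
      have hp : Tendsto p (nhds 0) (nhds ((x, u x), (x, u x))) := by
        have hc1 : Continuous fun ε : ℝ => x + ε • V x :=
          continuous_const.add (continuous_id.smul continuous_const)
        have hcp : Continuous p :=
          ((hc1.prodMk (huc.comp hc1))).prodMk (continuous_const.prodMk (huc.comp hc1))
        have := hcp.tendsto 0
        simpa [hpdef] using this
      have h1 : (fun ε => ψ (p ε).1 - ψ (p ε).2 - fderiv ℝ ψ (x, u x) ((p ε).1 - (p ε).2))
          =o[nhdsWithin 0 {0}ᶜ] fun ε => (p ε).1 - (p ε).2 :=
        hstrict.isLittleO.comp_tendsto (hp.mono_left nhdsWithin_le_nhds)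
      have hdiff : ∀ ε : ℝ, (p ε).1 - (p ε).2 = ((ε • V x, (0:ℝ)) : EuclideanSpace ℝ (Fin d) × ℝ) := by
        intro ε
        rw [hpdef]
        simp [Prod.sub_def]
      have h2 : (fun ε : ℝ => (p ε).1 - (p ε).2) =O[nhdsWithin 0 {0}ᶜ] fun ε => ε := by
        rw [isBigO_iff]
        refine ⟨‖V x‖, Eventually.of_forall fun ε => ?_⟩
        rw [hdiff]
        rw [Prod.norm_def]
        simp only [norm_zero, norm_smul]
        refine max_le (le_of_eq (by rw [Real.norm_eq_abs]; ring)) (by positivity)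
      have h3 := h1.trans_isBigO h2
      have h4 : (fun ε : ℝ => ψ (p ε).1 - ψ (p ε).2 - ε * c) =o[nhdsWithin 0 {0}ᶜ] fun ε => ε := by
        refine h3.congr' (Eventually.of_forall fun ε => ?_) (EventuallyEq.refl _ _)
        show ψ (p ε).1 - ψ (p ε).2 - fderiv ℝ ψ (x, u x) ((p ε).1 - (p ε).2)
            = ψ (p ε).1 - ψ (p ε).2 - ε * c
        rw [hdiff ε]
        have hsm : ((ε • V x, (0:ℝ)) : EuclideanSpace ℝ (Fin d) × ℝ) = ε • ((V x, (0:ℝ))) := by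
          simp [Prod.smul_def]
        rw [hsm, ContinuousLinearMap.map_smul, smul_eq_mul]
      have h5 : Tendsto (fun ε : ℝ => (ψ (p ε).1 - ψ (p ε).2 - ε * c) / ε)
          (nhdsWithin 0 {0}ᶜ) (nhds 0) := by
        refine (isLittleO_iff_tendsto' ?_).mp h4
        filter_upwards [hne] with ε hε0 h
        exact absurd h hε0
      have h6 : Tendsto (fun ε : ℝ =>
          (1/ε) * (ψ (x, u (x + ε • V x)) - ψ (x + ε • V x, u (x + ε • V x))))
          (nhdsWithin 0 {0}ᶜ) (nhds (-c)) := by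
        have h7 : Tendsto (fun ε : ℝ => -((ψ (p ε).1 - ψ (p ε).2 - ε * c) / ε + c))
            (nhdsWithin 0 {0}ᶜ) (nhds (-(0 + c))) := (h5.add_const c).neg
        rw [zero_add] at h7
        refine h7.congr' ?_
        filter_upwards [hne] with ε hε0
        show -((ψ (p ε).1 - ψ (p ε).2 - ε * c) / ε + c)
            = (1/ε) * (ψ (x, u (x + ε • V x)) - ψ (x + ε • V x, u (x + ε • V x)))
        simp only [hpdef]
        field_simp
        ring
      -- combine
      have h8 : Tendsto (fun ε : ℝ => (1/ε) * auxG V u ψ ε x)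
          (nhdsWithin 0 {0}ᶜ) (nhds (-c)) := by
        have := h6.mul (hD.mono_left nhdsWithin_le_nhds)
        rw [mul_one] at this
        refine this.congr fun ε => ?_
        unfold auxG
        ring
      have hfx : auxf Ω V u ψ x = -c := by
        unfold auxf
        rw [Set.indicator_of_mem hx]
        congr 1
        have hd : HasFDerivAt (fun y => ψ (y, u x))
            ((fderiv ℝ ψ (x, u x)).comp
              ((ContinuousLinearMap.id ℝ (EuclideanSpace ℝ (Fin d))).prod 0)) x :=
          (hψd (x, u x)).hasFDerivAt.comp x ((hasFDerivAt_id x).prodMk (hasFDerivAt_const (u x) x))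
        have hgr : gradient (fun y => ψ (y, u x)) x =
            (InnerProductSpace.toDual ℝ (EuclideanSpace ℝ (Fin d))).symm
              (fderiv ℝ (fun y => ψ (y, u x)) x) := rfl
        rw [hgr, InnerProductSpace.toDual_symm_apply, hd.fderiv]
        simp [hc]
      rw [hfx]
      exact h8.congr' (hmem'.mono fun _ h => h.symm)
    · -- outside the closure
      have hxcl : x ∉ closure Ω := by
        intro hcl
        exact hxf ⟨hcl, by rwa [hΩ_open.interior_eq]⟩
      have hmem : ∀ᶠ ε : ℝ in nhds 0, x + ε • V x ∈ (closure Ω)ᶜ :=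
        hcont (isClosed_closure.isOpen_compl.mem_nhds hxcl)
      have hmem' : ∀ᶠ ε : ℝ in nhdsWithin 0 {0}ᶜ, auxF Ω V u ψ ε x = 0 := by
        refine (hmem.filter_mono nhdsWithin_le_nhds).mono fun ε h => ?_
        unfold auxF
        exact Set.indicator_of_notMem
          (fun hmem'' : x ∈ auxS Ω V ε => h (subset_closure hmem'')) _
      have hfx : auxf Ω V u ψ x = 0 := by
        unfold auxf; exact Set.indicator_of_notMem hx _
      rw [hfx]
      exact tendsto_const_nhds.congr' (hmem'.mono fun _ h => h.symm)
  -- apply dominated convergence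
  have hmain := MeasureTheory.tendsto_integral_filter_of_dominated_convergence bound
    hmeas h_bound hbound_int h_lim
  -- rewrite both sides
  have h_eq : ∀ ε : ℝ, ∫ x, auxF Ω V u ψ ε x = (1/ε) * ∫ x in auxS Ω V ε, auxG V u ψ ε x := by
    intro ε
    unfold auxF
    rw [integral_indicator (hSopen ε).measurableSet]
    exact integral_const_mul _ _
  have h_int_eq : ∫ x, auxf Ω V u ψ x
      = -∫ x in Ω, ⟪gradient (fun y => ψ (y, u x)) x, V x⟫ := by
    unfold auxf
    rw [integral_indicator hΩ_open.measurableSet, integral_neg]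
  rw [h_int_eq] at hmain
  exact hmain.congr fun ε => by rw [h_eq ε]; rfl
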